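/- The additive semigroup (ℤ + √2·ℤ) ∩ ℝ_{≥0} is not finitely generated as a semigroup. -/

import Mathlib

lemma sqrt2_sub_one_pow_int (n : ℕ) :
    ∃ a b : ℤ, (Real.sqrt 2 - 1) ^ n = (a : ℝ) + (b : ℝ) * Real.sqrt 2 := by
  induction n with
  | zero => exact ⟨1, 0, by simp⟩
  | succ n ih =>
    obtain ⟨a, b, h⟩ := ih
    refine ⟨2 * b - a, a - b, ?_⟩
    have hs : Real.sqrt 2 * Real.sqrt 2 = 2 := Real.mul_self_sqrt (by norm_num)
    rw [pow_succ, h]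
    push_cast
    linear_combination (b : ℝ) * hs

/-- The additive semigroup (with `0`) `(ℤ + √2·ℤ) ∩ ℝ_{≥0}` is not finitely generated
as a semigroup. -/
theorem not_fg_nonneg_part_of_sqrt_two_quasilattice
    (S : AddSubmonoid ℝ)
    (hS : (S : Set ℝ) =
      {x : ℝ | x ∈ AddSubgroup.closure ({1, Real.sqrt 2} : Set ℝ) ∧ 0 ≤ x}) :
    ¬ ∃ t : Finset ℝ, AddSubmonoid.closure (t : Set ℝ) = S := by
  rintro ⟨t, ht⟩
  have hs2 : Real.sqrt 2 * Real.sqrt 2 = 2 := Real.mul_self_sqrt (by norm_num)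
  have hsnn : 0 ≤ Real.sqrt 2 := Real.sqrt_nonneg 2
  have hs1 : 1 < Real.sqrt 2 := by nlinarith
  have hs_lt : Real.sqrt 2 - 1 < 1 := by nlinarith
  -- elements of t are nonneg
  have hmemS : ∀ x ∈ t, x ∈ S := by
    intro x hx
    rw [← ht]
    exact AddSubmonoid.subset_closure hx
  have hnonneg : ∀ x ∈ t, 0 ≤ x := by
    intro x hx
    have : x ∈ (S : Set ℝ) := hmemS x hx
    rw [hS] at this
    exact this.2
  -- key claim: every element of S is 0 or bounded below by a positive generator
  have key : ∀ x ∈ S, x = 0 ∨ ∃ g ∈ t, 0 < g ∧ g ≤ x := by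
    intro x hx
    rw [← ht] at hx
    induction hx using AddSubmonoid.closure_induction with
    | mem g hg =>
      rcases eq_or_lt_of_le (hnonneg g hg) with h0 | hpos
      · exact Or.inl h0.symm
      · exact Or.inr ⟨g, hg, hpos, le_refl g⟩
    | zero => exact Or.inl rfl
    | add x y hxm hym hx hy =>
      rcases hx with rfl | ⟨g, hgt, hgpos, hgle⟩
      · simpa using hy
      · rcases hy with rfl | ⟨g', hg't, hg'pos, hg'le⟩
        · exact Or.inr ⟨g, hgt, hgpos, by simpa using hgle⟩
        · exact Or.inr ⟨g, hgt, hgpos, by linarith⟩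
  -- 1 ∈ S
  have h1S : (1 : ℝ) ∈ S := by
    have : (1 : ℝ) ∈ {x : ℝ | x ∈ AddSubgroup.closure ({1, Real.sqrt 2} : Set ℝ) ∧ 0 ≤ x} :=
      ⟨AddSubgroup.subset_closure (Set.mem_insert _ _), zero_le_one⟩
    rw [← hS] at this
    exact this
  -- the positive generators
  set tp : Finset ℝ := t.filter (fun x => 0 < x) with htp
  by_cases hne : tp.Nonempty
  · set ε := tp.min' hne with hε
    have hεmem : ε ∈ tp := tp.min'_mem hne
    have hεpos : 0 < ε := (Finset.mem_filter.mp hεmem).2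
    -- find a small positive element of S
    obtain ⟨n, hn⟩ := exists_pow_lt_of_lt_one hεpos hs_lt
    have hxpos : 0 < (Real.sqrt 2 - 1) ^ n := pow_pos (by linarith) n
    obtain ⟨a, b, hab⟩ := sqrt2_sub_one_pow_int n
    have hxS : (Real.sqrt 2 - 1) ^ n ∈ S := by
      have h1 : (1 : ℝ) ∈ AddSubgroup.closure ({1, Real.sqrt 2} : Set ℝ) :=
        AddSubgroup.subset_closure (Set.mem_insert _ _)
      have h2 : Real.sqrt 2 ∈ AddSubgroup.closure ({1, Real.sqrt 2} : Set ℝ) :=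
        AddSubgroup.subset_closure (Set.mem_insert_of_mem _ rfl)
      have hmem : (a : ℝ) + (b : ℝ) * Real.sqrt 2 ∈
          AddSubgroup.closure ({1, Real.sqrt 2} : Set ℝ) := by
        have ha : (a : ℝ) ∈ AddSubgroup.closure ({1, Real.sqrt 2} : Set ℝ) := by
          have := AddSubgroup.zsmul_mem _ h1 a
          simpa using this
        have hb : (b : ℝ) * Real.sqrt 2 ∈ AddSubgroup.closure ({1, Real.sqrt 2} : Set ℝ) := by
          have := AddSubgroup.zsmul_mem _ h2 b
          simpa [zsmul_eq_mul] using this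
        exact AddSubgroup.add_mem _ ha hb
      have : (Real.sqrt 2 - 1) ^ n ∈
          {x : ℝ | x ∈ AddSubgroup.closure ({1, Real.sqrt 2} : Set ℝ) ∧ 0 ≤ x} := by
        refine ⟨?_, le_of_lt hxpos⟩
        rw [hab]; exact hmem
      rw [← hS] at this
      exact this
    rcases key _ hxS with h0 | ⟨g, hgt, hgpos, hgle⟩
    · linarith
    · have : ε ≤ g := tp.min'_le g (Finset.mem_filter.mpr ⟨hgt, hgpos⟩)
      linarith
  · -- no positive generators: all generators are 0, contradicting 1 ∈ S
    rcases key _ h1S with h0 | ⟨g, hgt, hgpos, _⟩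
    · norm_num at h0
    · exact hne ⟨g, Finset.mem_filter.mpr ⟨hgt, hgpos⟩⟩
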